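/- Let X be a normal, locally compact space, Y a complete metric space, and (Z_i)_{i∈ℕ} a countable family of closed subsets of Y, each X-avoidable. Then the union ⋃_{i∈ℕ} Z_i is X-avoidable. -/

import Mathlib

/-- `Z` is `X`-avoidable: every continuous map `X → Y` admits, within any continuous
positive error function, a continuous perturbation whose image misses `Z`. -/
def Avoidable (X : Type) [TopologicalSpace X] {Y : Type} [MetricSpace Y] (Z : Set Y) : Prop :=
  ∀ f : X → Y, Continuous f → ∀ ε : X → ℝ, Continuous ε → (∀ x, 0 < ε x) →
    ∃ g : X → Y, Continuous g ∧ ∀ x, g x ∉ Z ∧ dist (f x) (g x) < ε x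

open Metric Topology Filter
open scoped Classical

/-- The type of "states" in the iterative construction: a continuous map together with a
continuous positive error budget. -/
abbrev AvoidState (X Y : Type) [TopologicalSpace X] [MetricSpace Y] :=
  {q : (X → Y) × (X → ℝ) // Continuous q.1 ∧ Continuous q.2 ∧ ∀ x, 0 < q.2 x}

noncomputable def avoidStep {X Y : Type} [TopologicalSpace X] [MetricSpace Y]
    (Z : ℕ → Set Y) (hZ : ∀ i, Avoidable X (Z i)) (n : ℕ) (p : AvoidState X Y) :
    AvoidState X Y :=
  ⟨((hZ n p.1.1 p.2.1 p.1.2 p.2.2.1 p.2.2.2).choose,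
    fun x => min (p.1.2 x / 2)
      ((if (Z n).Nonempty ∧ IsClosed (Z n) then
          infDist ((hZ n p.1.1 p.2.1 p.1.2 p.2.2.1 p.2.2.2).choose x) (Z n)
        else p.1.2 x) / 4)),
    (hZ n p.1.1 p.2.1 p.1.2 p.2.2.1 p.2.2.2).choose_spec.1,
    by
      apply p.2.2.1.div_const 2 |>.min
      apply Continuous.div_const ?_ 4
      split_ifs with h
      · exact (continuous_infDist_pt (Z n)).comp
          (hZ n p.1.1 p.2.1 p.1.2 p.2.2.1 p.2.2.2).choose_spec.1
      · exact p.2.2.1,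
    by
      intro x
      apply lt_min (by have := p.2.2.2 x; linarith)
      apply div_pos ?_ (by norm_num)
      split_ifs with h
      · exact (h.2.notMem_iff_infDist_pos h.1).1
          (((hZ n p.1.1 p.2.1 p.1.2 p.2.2.1 p.2.2.2).choose_spec.2 x).1)
      · exact p.2.2.2 x⟩

lemma avoidStep_spec {X Y : Type} [TopologicalSpace X] [MetricSpace Y]
    (Z : ℕ → Set Y) (hZ : ∀ i, Avoidable X (Z i)) (n : ℕ) (p : AvoidState X Y) (x : X) :
    (avoidStep Z hZ n p).1.1 x ∉ Z n ∧
      dist (p.1.1 x) ((avoidStep Z hZ n p).1.1 x) < p.1.2 x :=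
  (hZ n p.1.1 p.2.1 p.1.2 p.2.2.1 p.2.2.2).choose_spec.2 x

lemma avoidStep_e_le {X Y : Type} [TopologicalSpace X] [MetricSpace Y]
    (Z : ℕ → Set Y) (hZ : ∀ i, Avoidable X (Z i)) (n : ℕ) (p : AvoidState X Y) (x : X) :
    (avoidStep Z hZ n p).1.2 x ≤ p.1.2 x / 2 :=
  min_le_left _ _

lemma avoidStep_e_le' {X Y : Type} [TopologicalSpace X] [MetricSpace Y]
    (Z : ℕ → Set Y) (hZ : ∀ i, Avoidable X (Z i)) (n : ℕ) (p : AvoidState X Y) (x : X)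
    (h1 : (Z n).Nonempty) (h2 : IsClosed (Z n)) :
    (avoidStep Z hZ n p).1.2 x ≤ infDist ((avoidStep Z hZ n p).1.1 x) (Z n) / 4 := by
  unfold avoidStep
  simp only [if_pos (show (Z n).Nonempty ∧ IsClosed (Z n) from ⟨h1, h2⟩)]
  exact min_le_right _ _

noncomputable def avoidSeq {X Y : Type} [TopologicalSpace X] [MetricSpace Y]
    (Z : ℕ → Set Y) (hZ : ∀ i, Avoidable X (Z i))
    (f : X → Y) (hf : Continuous f) (ε : X → ℝ) (hε : Continuous ε) (hεp : ∀ x, 0 < ε x) :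
    ℕ → AvoidState X Y := fun n =>
  Nat.rec (⟨(f, fun x => ε x / 4), hf, hε.div_const 4,
      fun x => by have := hεp x; linarith⟩ : AvoidState X Y)
    (fun n p => avoidStep Z hZ n p) n

theorem stmt_7 (X : Type) [TopologicalSpace X] [NormalSpace X] [LocallyCompactSpace X]
    (Y : Type) [MetricSpace Y] [CompleteSpace Y] (Z : ℕ → Set Y)
    (hZc : ∀ i, IsClosed (Z i)) (hZ : ∀ i, Avoidable X (Z i)) :
    Avoidable X (⋃ i, Z i) := by
  intro f hf ε hε hεp
  set S : ℕ → AvoidState X Y := avoidSeq Z hZ f hf ε hε hεp with hS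
  set g : ℕ → X → Y := fun n => (S n).1.1 with hg
  set e : ℕ → X → ℝ := fun n => (S n).1.2 with he
  have hSsucc : ∀ n, S (n + 1) = avoidStep Z hZ n (S n) := fun n => rfl
  have hgc : ∀ n, Continuous (g n) := fun n => (S n).2.1
  have hep : ∀ n x, 0 < e n x := fun n => (S n).2.2.2
  have hg0 : g 0 = f := rfl
  have he0 : ∀ x, e 0 x = ε x / 4 := fun x => rfl
  have hd : ∀ n x, dist (g n x) (g (n + 1) x) < e n x := by
    intro n x
    exact (avoidStep_spec Z hZ n (S n) x).2
  have hnm : ∀ n x, g (n + 1) x ∉ Z n := by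
    intro n x
    exact (avoidStep_spec Z hZ n (S n) x).1
  have he2 : ∀ n x, e (n + 1) x ≤ e n x / 2 := fun n x => avoidStep_e_le Z hZ n (S n) x
  have heZ : ∀ n x, (Z n).Nonempty → e (n + 1) x ≤ infDist (g (n + 1) x) (Z n) / 4 :=
    fun n x h1 => avoidStep_e_le' Z hZ n (S n) x h1 (hZc n)
  -- geometric decay of the budgets
  have hgeo : ∀ n x, e n x ≤ ε x / 4 * (1 / 2) ^ n := by
    intro n x
    induction n with
    | zero => simp [he0 x]
    | succ n ih =>
      calc e (n + 1) x ≤ e n x / 2 := he2 n x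
        _ ≤ (ε x / 4 * (1 / 2) ^ n) / 2 := by linarith
        _ = ε x / 4 * (1 / 2) ^ (n + 1) := by ring
  have hgeo' : ∀ n m x, e (n + m) x ≤ e n x * (1 / 2) ^ m := by
    intro n m x
    induction m with
    | zero => simp
    | succ m ih =>
      calc e (n + (m + 1)) x = e ((n + m) + 1) x := by ring_nf
        _ ≤ e (n + m) x / 2 := he2 _ x
        _ ≤ (e n x * (1 / 2) ^ m) / 2 := by linarith
        _ = e n x * (1 / 2) ^ (m + 1) := by ring
  -- the limit function
  have hcau : ∀ x, CauchySeq fun n => g n x := by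
    intro x
    exact cauchySeq_of_le_geometric (1 / 2) (ε x / 4) (by norm_num)
      (fun n => (hd n x).le.trans (hgeo n x))
  choose L hL using fun x => cauchySeq_tendsto_of_complete (hcau x)
  have hdistL : ∀ n x, dist (g n x) (L x) ≤ ε x / 2 * (1 / 2) ^ n := by
    intro n x
    have := dist_le_of_le_geometric_of_tendsto (1 / 2) (ε x / 4) (by norm_num)
      (fun n => (hd n x).le.trans (hgeo n x)) (hL x) n
    calc dist (g n x) (L x) ≤ ε x / 4 * (1 / 2) ^ n / (1 - 1 / 2) := this
      _ = ε x / 2 * (1 / 2) ^ n := by ring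
  -- distance from the (n+1)-st stage to the limit is at most twice the (n+1)-st budget
  have hdistL' : ∀ n x, dist (g (n + 1) x) (L x) ≤ 2 * e (n + 1) x := by
    intro n x
    have htend : Filter.Tendsto (fun m => g (m + (n + 1)) x) Filter.atTop (nhds (L x)) :=
      (hL x).comp (Filter.tendsto_add_atTop_nat (n + 1))
    have hu : ∀ m, dist (g (m + (n + 1)) x) (g (m + 1 + (n + 1)) x) ≤
        e (n + 1) x * (1 / 2) ^ m := by
      intro m
      have h1 : dist (g (m + (n + 1)) x) (g (m + (n + 1) + 1) x) < e (m + (n + 1)) x :=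
        hd _ x
      have h2 : e (m + (n + 1)) x ≤ e (n + 1) x * (1 / 2) ^ m := by
        have := hgeo' (n + 1) m x
        rw [add_comm] at this
        exact this
      have h3 : m + (n + 1) + 1 = m + 1 + (n + 1) := by ring
      rw [h3] at h1
      linarith
    have := dist_le_of_le_geometric_of_tendsto₀ (1 / 2) (e (n + 1) x) (by norm_num) hu htend
    simp only [zero_add] at this
    calc dist (g (n + 1) x) (L x) ≤ e (n + 1) x / (1 - 1 / 2) := this
      _ = 2 * e (n + 1) x := by ring
  -- continuity of the limit via locally uniform convergence
  have hLU : TendstoLocallyUniformly (fun n x => g n x) L Filter.atTop := by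
    rw [tendstoLocallyUniformly_iff_forall_isCompact]
    intro K hK
    rw [Metric.tendstoUniformlyOn_iff]
    intro δ hδ
    rcases K.eq_empty_or_nonempty with rfl | hKne
    · simp
    obtain ⟨xm, hxm, hmax⟩ := hK.exists_isMaxOn hKne hε.continuousOn
    have hM : ∀ x ∈ K, ε x ≤ ε xm := fun x hx => hmax hx
    have ht : Filter.Tendsto (fun n : ℕ => ε xm / 2 * (1 / 2 : ℝ) ^ n)
        Filter.atTop (𝓝 0) := by
      simpa using (tendsto_pow_atTop_nhds_zero_of_lt_one (by norm_num : (0:ℝ) ≤ 1 / 2)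
        (by norm_num)).const_mul (ε xm / 2)
    filter_upwards [ht.eventually (gt_mem_nhds hδ)] with n hn x hx
    have h1 : dist (L x) (g n x) ≤ ε x / 2 * (1 / 2) ^ n := by
      rw [dist_comm]; exact hdistL n x
    have h2 : ε x / 2 * (1 / 2 : ℝ) ^ n ≤ ε xm / 2 * (1 / 2) ^ n := by
      have := hM x hx
      have hp : (0:ℝ) ≤ (1 / 2 : ℝ) ^ n := by positivity
      nlinarith
    exact lt_of_le_of_lt (h1.trans h2) hn
  refine ⟨L, hLU.continuous (Filter.Eventually.of_forall hgc).frequently, fun x => ⟨?_, ?_⟩⟩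
  · -- the limit avoids every Z n
    rw [Set.mem_iUnion]
    push_neg
    intro n hmem
    rcases Set.eq_empty_or_nonempty (Z n) with hemp | hne
    · rw [hemp] at hmem; exact hmem
    have hpos : 0 < infDist (g (n + 1) x) (Z n) :=
      ((hZc n).notMem_iff_infDist_pos hne).1 (hnm n x)
    have h1 : dist (g (n + 1) x) (L x) ≤ 2 * e (n + 1) x := hdistL' n x
    have h2 : e (n + 1) x ≤ infDist (g (n + 1) x) (Z n) / 4 := heZ n x hne
    have h3 : infDist (g (n + 1) x) (Z n) ≤ dist (g (n + 1) x) (L x) :=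
      infDist_le_dist_of_mem hmem
    linarith
  · -- the limit is close to f
    have := hdistL 0 x
    rw [hg0] at this
    simp only [pow_zero, mul_one] at this
    have := hεp x
    linarith
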